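/- Let K ⊆ ℝ^n be a nonempty closed convex set, and let f be a polynomial of degree d ≥ 1 with Sol(K,f) nonempty. If the optimal value function φ(g) = inf{g(x) : x ∈ K} is finite-valued and locally Lipschitz continuous at f (there exist ε > 0 and L > 0 with |φ(g) − φ(f)| ≤ L‖g − f‖ for all g ∈ P_d with ‖g − f‖ < ε), then OP(K,f) is regular, i.e., Sol(K∞, f_d) is bounded. -/

import Mathlib

open Filter Topology MvPolynomial Bornology
open scoped RealInnerProductSpace Pointwise

noncomputable section

/-- `ℝ^n` as Euclidean space. -/
abbrev En (n : ℕ) := EuclideanSpace ℝ (Fin n)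

/-- Evaluation of a multivariate polynomial at a point of `ℝ^n`. -/
def evalP {n : ℕ} (f : MvPolynomial (Fin n) ℝ) (x : En n) : ℝ :=
  MvPolynomial.eval (fun i => x i) f

/-- `Sol(C,g)`: the set of global minimizers of `g` on `C`. -/
def solSet {n : ℕ} (C : Set (En n)) (g : En n → ℝ) : Set (En n) :=
  {x ∈ C | ∀ y ∈ C, g x ≤ g y}

/-- `K∞`: the asymptotic cone of `K`. -/
def asympCone {n : ℕ} (K : Set (En n)) : Set (En n) :=
  {v | ∃ (t : ℕ → ℝ) (x : ℕ → En n), (∀ k, x k ∈ K) ∧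
    Tendsto t atTop atTop ∧ Tendsto (fun k => (t k)⁻¹ • x k) atTop (𝓝 v)}

/-- The gradient `∇f` of a polynomial, via its partial derivatives. -/
def polyGrad {n : ℕ} (f : MvPolynomial (Fin n) ℝ) (x : En n) : En n :=
  WithLp.toLp 2 (fun i => MvPolynomial.eval (fun j => x j) (MvPolynomial.pderiv i f))

/-- The `ℓ2`-norm of the coefficient vector of a polynomial. -/
def l2Norm {n : ℕ} (p : MvPolynomial (Fin n) ℝ) : ℝ :=
  Real.sqrt (∑ m ∈ p.support, (MvPolynomial.coeff m p) ^ 2)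

/-- `S` is generic (residual) in `X`: it contains a countable intersection of sets, each of
which is open and dense in `X` (with respect to the `ℓ2` coefficient metric). -/
def IsGenericIn {n : ℕ} (X S : Set (MvPolynomial (Fin n) ℝ)) : Prop :=
  ∃ D : ℕ → Set (MvPolynomial (Fin n) ℝ),
    (∀ k, D k ⊆ X ∧
      (∀ g ∈ D k, ∃ ε > 0, ∀ g' ∈ X, l2Norm (g' - g) < ε → g' ∈ D k) ∧
      (∀ g ∈ X, ∀ ε > 0, ∃ g' ∈ D k, l2Norm (g' - g) < ε)) ∧
    X ∩ (⋂ k, D k) ⊆ S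

lemma aux_eval_homog_smul {n k : ℕ} {p : MvPolynomial (Fin n) ℝ} (hp : p.IsHomogeneous k)
    (c : ℝ) (x : Fin n → ℝ) :
    eval (fun i => c * x i) p = c ^ k * eval x p := by
  rw [eval_eq, eval_eq, Finset.mul_sum]
  refine Finset.sum_congr rfl fun m hm => ?_
  have hdeg : m.degree = k := by
    rw [Finsupp.degree_eq_weight_one]
    exact hp (by simpa using hm)
  have : ∏ i ∈ m.support, (c * x i) ^ m i
      = (∏ i ∈ m.support, c ^ m i) * ∏ i ∈ m.support, x i ^ m i := by
    rw [← Finset.prod_mul_distrib]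
    exact Finset.prod_congr rfl fun i _ => mul_pow _ _ _
  rw [this, Finset.prod_pow_eq_pow_sum]
  have : ∑ i ∈ m.support, m i = k := hdeg
  rw [this]; ring

lemma aux_zero_mem_asympCone {n : ℕ} {K : Set (En n)} (hKne : K.Nonempty) :
    (0 : En n) ∈ asympCone K := by
  obtain ⟨x, hx⟩ := hKne
  have h1 : Tendsto (fun k : ℕ => (k : ℝ)) atTop atTop := tendsto_natCast_atTop_atTop
  have h2 : Tendsto (fun k : ℕ => ((k : ℝ))⁻¹ • x) atTop (𝓝 (0 : En n)) := by
    have := (h1.inv_tendsto_atTop).smul_const x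
    simpa using this
  exact ⟨fun k => (k : ℝ), fun _ => x, fun _ => hx, h1, h2⟩

lemma aux_ray_mem {n : ℕ} {K : Set (En n)} (hKcl : IsClosed K) (hKcv : Convex ℝ K)
    {v : En n} (hv : v ∈ asympCone K) {x : En n} (hx : x ∈ K) {s : ℝ} (hs : 0 ≤ s) :
    x + s • v ∈ K := by
  rcases hs.eq_or_lt with rfl | hs
  · simpa using hx
  obtain ⟨t, xs, hxs, ht, hconv⟩ := hv
  have hti : Tendsto (fun k => (t k)⁻¹) atTop (𝓝 0) := ht.inv_tendsto_atTop
  have hy : Tendsto (fun k => (1 - s * (t k)⁻¹) • x + (s * (t k)⁻¹) • xs k) atTop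
      (𝓝 (x + s • v)) := by
    have h1 : Tendsto (fun k => (s * (t k)⁻¹)) atTop (𝓝 0) := by
      simpa using hti.const_mul s
    have h2 : Tendsto (fun k => (1 - s * (t k)⁻¹) • x) atTop (𝓝 x) := by
      have := (h1.const_sub 1).smul_const x
      simpa using this
    have h3 : Tendsto (fun k => (s * (t k)⁻¹) • xs k) atTop (𝓝 (s • v)) := by
      have := hconv.const_smul s
      simp only [smul_smul] at this
      exact this
    exact h2.add h3
  refine hKcl.mem_of_tendsto hy ?_
  filter_upwards [ht.eventually_ge_atTop s, ht.eventually_gt_atTop 0] with k hk hk0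
  have hb0 : 0 ≤ s * (t k)⁻¹ := by positivity
  have hb1 : s * (t k)⁻¹ ≤ 1 := by
    rw [← div_eq_mul_inv]
    exact (div_le_one hk0).mpr hk
  exact hKcv hx (hxs k) (by linarith) hb0 (by ring)

lemma aux_l2Norm_neg {n : ℕ} (p : MvPolynomial (Fin n) ℝ) : l2Norm (-p) = l2Norm p := by
  unfold l2Norm
  rw [support_neg]
  congr 1
  exact Finset.sum_congr rfl fun m _ => by rw [coeff_neg, neg_sq]

lemma aux_l2Norm_nonneg {n : ℕ} (p : MvPolynomial (Fin n) ℝ) : 0 ≤ l2Norm p :=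
  Real.sqrt_nonneg _

lemma aux_l2Norm_C_mul_le {n : ℕ} (c : ℝ) (p : MvPolynomial (Fin n) ℝ) :
    l2Norm (C c * p) ≤ |c| * l2Norm p := by
  unfold l2Norm
  rw [← Real.sqrt_sq (abs_nonneg c), ← Real.sqrt_mul (by positivity)]
  apply Real.sqrt_le_sqrt
  have hsub : (C c * p).support ⊆ p.support := by
    intro m hm
    simp only [mem_support_iff, coeff_C_mul] at hm ⊢
    exact fun h => hm (by rw [h, mul_zero])
  calc ∑ m ∈ (C c * p).support, (coeff m (C c * p)) ^ 2
      ≤ ∑ m ∈ p.support, (coeff m (C c * p)) ^ 2 :=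
        Finset.sum_le_sum_of_subset_of_nonneg hsub (fun _ _ _ => sq_nonneg _)
    _ = |c| ^ 2 * ∑ m ∈ p.support, (coeff m p) ^ 2 := by
        rw [Finset.mul_sum]
        exact Finset.sum_congr rfl fun m _ => by rw [coeff_C_mul, mul_pow, sq_abs]

set_option maxHeartbeats 1000000 in
/-- If `K` is nonempty closed convex, `f` has degree `d ≥ 1`, `Sol(K,f) ≠ ∅`, and the optimal
value function `φ(g) = inf_K g` is finite-valued and locally Lipschitz continuous at `f`, then
`OP(K,f)` is regular, i.e. `Sol(K∞, f_d)` is bounded. -/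
theorem stmt15 {n d : ℕ} (hd : 1 ≤ d) (K : Set (En n)) (hKne : K.Nonempty) (hKcl : IsClosed K)
    (hKcv : Convex ℝ K) (f : MvPolynomial (Fin n) ℝ) (hdeg : f.totalDegree = d)
    (hSolne : (solSet K (evalP f)).Nonempty)
    (hlip : ∃ ε > (0 : ℝ), ∃ L > (0 : ℝ),
      ∀ g : MvPolynomial (Fin n) ℝ, g.totalDegree ≤ d → l2Norm (g - f) < ε →
        BddBelow (evalP g '' K) ∧
        |sInf (evalP g '' K) - sInf (evalP f '' K)| ≤ L * l2Norm (g - f)) :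
    IsBounded (solSet (asympCone K) (evalP (homogeneousComponent d f))) := by
  by_contra hub
  rw [isBounded_iff_forall_norm_le] at hub
  push_neg at hub
  obtain ⟨v, hvS, hvnorm⟩ := hub 0
  obtain ⟨hvK, hvmin⟩ := hvS
  obtain ⟨ε₀, hε₀, L, hL, hlip⟩ := hlip
  have hdne : d ≠ 0 := by omega
  set F : ℕ → MvPolynomial (Fin n) ℝ := fun k => homogeneousComponent k f with hF
  -- basic coordinate facts
  have hzero : (fun i => (0 : En n) i) = fun _ : Fin n => (0 : ℝ) := by funext i; simp
  -- evalP of a homogeneous component under scaling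
  have hevalsmul : ∀ (k : ℕ) (s : ℝ) (z : En n),
      evalP (F k) (s • z) = s ^ k * evalP (F k) z := by
    intro k s z
    have h := aux_eval_homog_smul (homogeneousComponent_isHomogeneous k f) s (fun i => z i)
    have hfun : (fun i => (s • z) i) = fun i => s * z i := by
      funext i; simp [PiLp.smul_apply, smul_eq_mul]
    unfold evalP
    rw [hfun, h]
  -- f_d(0) = 0 and f_d(v) ≤ 0
  have hF0 : evalP (F d) (0 : En n) = 0 := by
    have h := hevalsmul d 0 0
    simpa [zero_pow hdne] using h
  have h0K := aux_zero_mem_asympCone hKne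
  have hfdv : evalP (F d) v ≤ 0 := by
    have h := hvmin 0 h0K
    rw [show homogeneousComponent d f = F d from rfl] at h
    rw [hF0] at h
    exact h
  -- v ≠ 0 and positivity of ⟨v,v⟩
  have hvne : v ≠ 0 := by
    intro h; rw [h] at hvnorm; simp at hvnorm
  set ipv : ℝ := ∑ i, v i * v i with hipv
  have hipvpos : 0 < ipv := by
    obtain ⟨i, hi⟩ : ∃ i, v i ≠ 0 := by
      by_contra hc
      push_neg at hc
      exact hvne (by ext i; simpa using hc i)
    refine Finset.sum_pos' (fun j _ => mul_self_nonneg _) ⟨i, Finset.mem_univ i, ?_⟩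
    exact mul_self_pos.mpr hi
  -- the perturbation polynomial
  set ℓ : MvPolynomial (Fin n) ℝ := ∑ i, C (v i) * X i with hℓ
  set q : MvPolynomial (Fin n) ℝ := ℓ ^ d with hq
  have hNq := aux_l2Norm_nonneg q
  set ε : ℝ := ε₀ / (2 * (l2Norm q + 1)) with hε
  have hεpos : 0 < ε := by positivity
  set g : MvPolynomial (Fin n) ℝ := f - C ε * q with hg
  have hℓdeg : ℓ.totalDegree ≤ 1 := by
    refine (totalDegree_finset_sum _ _).trans (Finset.sup_le fun i _ => ?_)
    calc (C (v i) * X i).totalDegree ≤ (C (v i)).totalDegree + (X i).totalDegree :=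
          totalDegree_mul _ _
      _ ≤ 1 := by rw [totalDegree_C, totalDegree_X]
  have hqdeg : q.totalDegree ≤ d := by
    calc q.totalDegree ≤ d * ℓ.totalDegree := totalDegree_pow _ _
      _ ≤ d * 1 := Nat.mul_le_mul_left d hℓdeg
      _ = d := mul_one d
  have hgdeg : g.totalDegree ≤ d := by
    rw [hg, sub_eq_add_neg]
    refine (totalDegree_add _ _).trans (max_le (le_of_eq hdeg) ?_)
    rw [totalDegree_neg]
    calc (C ε * q).totalDegree ≤ (C ε).totalDegree + q.totalDegree := totalDegree_mul _ _
      _ ≤ d := by rw [totalDegree_C]; simpa using hqdeg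
  have hgnorm : l2Norm (g - f) < ε₀ := by
    have h1 : g - f = -(C ε * q) := by rw [hg]; ring
    rw [h1, aux_l2Norm_neg]
    calc l2Norm (C ε * q) ≤ |ε| * l2Norm q := aux_l2Norm_C_mul_le ε q
      _ = ε * l2Norm q := by rw [abs_of_pos hεpos]
      _ < ε₀ := by
          rw [hε, div_mul_eq_mul_div, div_lt_iff₀ (by positivity)]
          nlinarith
  obtain ⟨hbdd, -⟩ := hlip g hgdeg hgnorm
  obtain ⟨b, hb⟩ := hbdd
  obtain ⟨x₀, hx₀⟩ := hKne
  -- evaluation formulas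
  have hevalq : ∀ z : En n, evalP q z = (∑ i, v i * z i) ^ d := by
    intro z
    unfold evalP
    rw [hq, map_pow]
    congr 1
    rw [hℓ, map_sum]
    exact Finset.sum_congr rfl fun i _ => by simp
  have hevalg : ∀ z : En n, evalP g z = evalP f z - ε * evalP q z := by
    intro z
    unfold evalP
    rw [hg, map_sub, map_mul, eval_C]
  have hsumf : ∀ z : En n, evalP f z = ∑ k ∈ Finset.range (d + 1), evalP (F k) z := by
    intro z
    have hs := sum_homogeneousComponent f
    rw [hdeg] at hs
    unfold evalP
    conv_lhs => rw [← hs]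
    rw [map_sum]
  -- limits along the ray
  have hw : Tendsto (fun s : ℝ => v + s⁻¹ • x₀) atTop (𝓝 v) := by
    have h1 := (tendsto_inv_atTop_zero (𝕜 := ℝ)).smul_const x₀
    simpa using tendsto_const_nhds.add h1
  have hcont : ∀ p : MvPolynomial (Fin n) ℝ, Continuous (evalP p) := by
    intro p
    unfold evalP
    exact p.continuous_eval.comp (continuous_pi fun i => (continuous_apply i).comp (PiLp.continuous_ofLp 2 _))
  have hlim : ∀ p : MvPolynomial (Fin n) ℝ,
      Tendsto (fun s : ℝ => evalP p (v + s⁻¹ • x₀)) atTop (𝓝 (evalP p v)) :=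
    fun p => ((hcont p).tendsto v).comp hw
  set c' : ℝ := ε * ipv ^ d with hc'
  have hc'pos : 0 < c' := by positivity
  set ipx : ℝ := ∑ i, v i * x₀ i with hipx
  have hipw : ∀ s : ℝ, (∑ i, v i * (v + s⁻¹ • x₀) i) = ipv + s⁻¹ * ipx := by
    intro s
    rw [hipv, hipx, Finset.mul_sum, ← Finset.sum_add_distrib]
    refine Finset.sum_congr rfl fun i _ => ?_
    have : (v + s⁻¹ • x₀) i = v i + s⁻¹ * x₀ i := rfl
    rw [this]; ring
  -- eventual bounds
  set B : ℝ := ∑ k ∈ Finset.range d, (|evalP (F k) v| + 1) with hB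
  have hev1 : ∀ᶠ s : ℝ in atTop, ∀ k ∈ Finset.range d,
      evalP (F k) (v + s⁻¹ • x₀) ≤ |evalP (F k) v| + 1 := by
    rw [Filter.eventually_all_finset]
    intro k _
    exact ((hlim (F k)).eventually_lt_const
      (by have := le_abs_self (evalP (F k) v); linarith)).mono fun s hs => hs.le
  have hev2 : ∀ᶠ s : ℝ in atTop,
      evalP (F d) (v + s⁻¹ • x₀) - ε * (ipv + s⁻¹ * ipx) ^ d < -(c' / 2) := by
    have hten : Tendsto (fun s : ℝ => evalP (F d) (v + s⁻¹ • x₀) - ε * (ipv + s⁻¹ * ipx) ^ d)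
        atTop (𝓝 (evalP (F d) v - ε * ipv ^ d)) := by
      have h1 : Tendsto (fun s : ℝ => ipv + s⁻¹ * ipx) atTop (𝓝 ipv) := by
        have := (tendsto_inv_atTop_zero (𝕜 := ℝ)).mul_const ipx
        simpa using tendsto_const_nhds.add this
      exact (hlim (F d)).sub ((h1.pow d).const_mul ε)
    exact hten.eventually_lt_const (by rw [← hc']; linarith)
  have hev3 : ∀ᶠ s : ℝ in atTop, (1 : ℝ) ≤ s := eventually_ge_atTop 1
  have hev4 : ∀ᶠ s : ℝ in atTop, B - c' / 2 * s < b ∧ B - c' / 2 * s ≤ 0 := by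
    have hten : Tendsto (fun s : ℝ => B - c' / 2 * s) atTop atBot := by
      have h1 : Tendsto (fun s : ℝ => c' / 2 * s) atTop atTop :=
        Tendsto.const_mul_atTop (by linarith) tendsto_id
      have h2 : Tendsto (fun s : ℝ => -(c' / 2 * s)) atTop atBot := tendsto_neg_atTop_atBot.comp h1
      simpa [sub_eq_add_neg] using tendsto_atBot_add_const_left atTop B h2
    exact (hten.eventually_lt_atBot b).and (hten.eventually_le_atBot 0)
  obtain ⟨s, hs1, hs2, hs3, hs4⟩ := (hev1.and (hev2.and (hev3.and hev4))).exists
  have hs0 : 0 < s := lt_of_lt_of_le one_pos hs3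
  set w : En n := v + s⁻¹ • x₀ with hwdef
  have hxsv : x₀ + s • v = s • w := by
    rw [hwdef, smul_add, smul_smul, mul_inv_cancel₀ (ne_of_gt hs0), one_smul, add_comm]
  have hkey : evalP g (x₀ + s • v)
      = (∑ k ∈ Finset.range d, s ^ k * evalP (F k) w)
        + s ^ d * (evalP (F d) w - ε * (ipv + s⁻¹ * ipx) ^ d) := by
    rw [hxsv, hevalg, hsumf, hevalq]
    have hrw : ∀ k ∈ Finset.range (d + 1), evalP (F k) (s • w) = s ^ k * evalP (F k) w :=
      fun k _ => hevalsmul k s w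
    rw [Finset.sum_congr rfl hrw]
    have hsmulsum : (∑ i, v i * (s • w) i) = s * (ipv + s⁻¹ * ipx) := by
      rw [← hipw s, Finset.mul_sum]
      refine Finset.sum_congr rfl fun i _ => ?_
      have h : (s • w) i = s * w i := rfl
      rw [h]; ring
    rw [hsmulsum, mul_pow, Finset.sum_range_succ]
    ring
  have hsd1 : (1 : ℝ) ≤ s ^ (d - 1) := one_le_pow₀ hs3
  have hstep1 : evalP g (x₀ + s • v) ≤ s ^ (d - 1) * B + s ^ d * (-(c' / 2)) := by
    rw [hkey]
    have h1 : (∑ k ∈ Finset.range d, s ^ k * evalP (F k) w) ≤ s ^ (d - 1) * B := by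
      rw [hB, Finset.mul_sum]
      refine Finset.sum_le_sum fun k hk => ?_
      have hk' : k ≤ d - 1 := by
        have := Finset.mem_range.mp hk; omega
      calc s ^ k * evalP (F k) w ≤ s ^ k * (|evalP (F k) v| + 1) :=
            mul_le_mul_of_nonneg_left (hs1 k hk) (pow_nonneg hs0.le k)
        _ ≤ s ^ (d - 1) * (|evalP (F k) v| + 1) := by
            have habs : (0:ℝ) ≤ |evalP (F k) v| + 1 := by positivity
            exact mul_le_mul_of_nonneg_right (pow_le_pow_right₀ hs3 hk') habs
    have h2 : s ^ d * (evalP (F d) w - ε * (ipv + s⁻¹ * ipx) ^ d) ≤ s ^ d * (-(c' / 2)) :=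
      mul_le_mul_of_nonneg_left hs2.le (pow_nonneg hs0.le d)
    linarith
  have hstep2 : s ^ (d - 1) * B + s ^ d * (-(c' / 2)) = s ^ (d - 1) * (B - c' / 2 * s) := by
    have h : s ^ d = s ^ (d - 1) * s := by
      conv_lhs => rw [show d = (d - 1) + 1 by omega]
      rw [pow_succ]
    rw [h]; ring
  have hstep3 : s ^ (d - 1) * (B - c' / 2 * s) ≤ B - c' / 2 * s := by
    have h := mul_le_mul_of_nonpos_right hsd1 hs4.2
    linarith
  have hmem : x₀ + s • v ∈ K := aux_ray_mem hKcl hKcv hvK hx₀ hs0.le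
  have hble := hb (Set.mem_image_of_mem (evalP g) hmem)
  linarith [hs4.1]


end
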